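/- Fix a dimension d ≥ 1, let R₁ > 0 and U = ball(0,R₁) ⊆ ℝ^d. For every nonempty compact set K₀ ⊆ ℝ^d, the function on C(U, ℝ) (continuous real-valued functions on U with the compact-open topology and its Borel σ-algebra) sending f to hausdorffEdist(closure{x ∈ U : f(x) > 0}, K₀) ∈ [0,∞] is Borel measurable, where the closure is taken in ℝ^d. This expresses Borel measurability of the support map f ↦ closure{x : f(x) > 0} from C(U) into the space of compact subsets of closedBall(0,R₁). -/

import Mathlib

open TopologicalSpace Metric

section Aux

variable {X : Type*} [TopologicalSpace X] {g : X → ENNReal} {T : Set X} {x : X}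

lemma aux_le_biSup (hg : Continuous g) (hx : x ∈ closure T) : g x ≤ ⨆ t ∈ T, g t := by
  have hcl : IsClosed {z | g z ≤ ⨆ t ∈ T, g t} := isClosed_le hg continuous_const
  exact hcl.closure_subset_iff.mpr (fun t ht => le_iSup₂ (f := fun t _ => g t) t ht) hx

lemma aux_biInf_le (hg : Continuous g) (hx : x ∈ closure T) : ⨅ t ∈ T, g t ≤ g x := by
  have hcl : IsClosed {z | ⨅ t ∈ T, g t ≤ g z} := isClosed_le continuous_const hg
  exact hcl.closure_subset_iff.mpr (fun t ht => iInf₂_le (f := fun t _ => g t) t ht) hx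

/-- sup over a set equals sup over a dense subset, for continuous `g`. -/
lemma aux_biSup_eq (hg : Continuous g) {S : Set X} (hST : T ⊆ S) (hS : S ⊆ closure T) :
    ⨆ t ∈ S, g t = ⨆ t ∈ T, g t := by
  refine le_antisymm (iSup₂_le fun x hx => aux_le_biSup hg (hS hx)) ?_
  exact iSup₂_le fun x hx => le_iSup₂ (f := fun t _ => g t) x (hST hx)

lemma aux_biInf_eq (hg : Continuous g) {S : Set X} (hST : T ⊆ S) (hS : S ⊆ closure T) :
    ⨅ t ∈ S, g t = ⨅ t ∈ T, g t := by
  refine le_antisymm ?_ (le_iInf₂ fun x hx => aux_biInf_le hg (hS hx))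
  exact le_iInf₂ fun x hx => iInf₂_le (f := fun t _ => g t) x (hST hx)

lemma aux_iSup_prop (P : Prop) [Decidable P] (c : ENNReal) :
    (⨆ _ : P, c) = if P then c else 0 := by
  split
  · rwa [iSup_pos]
  · rw [iSup_neg ‹_›]; rfl

lemma aux_iInf_prop (P : Prop) [Decidable P] (c : ENNReal) :
    (⨅ _ : P, c) = if P then c else ⊤ := by
  split
  · rwa [iInf_pos]
  · rw [iInf_neg ‹_›]

end Aux

/-- Borel measurability of the support map (used in Proposition 2.2(b)):
`f ↦ hausdorffEdist(closure {x ∈ B(0,R₁) : f(x) > 0}, K₀)` is Borel on `C(B(0,R₁), ℝ)`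
with the compact-open topology. -/
theorem stmt18 (d : ℕ) (hd : 1 ≤ d) (R₁ : ℝ) (hR₁ : 0 < R₁)
    (K₀ : Set (EuclideanSpace ℝ (Fin d))) (hK₀c : IsCompact K₀) (hK₀ne : K₀.Nonempty) :
    @Measurable C(↥(Metric.ball (0 : EuclideanSpace ℝ (Fin d)) R₁), ℝ) ENNReal
      (borel C(↥(Metric.ball (0 : EuclideanSpace ℝ (Fin d)) R₁), ℝ)) _
      (fun f =>
        EMetric.hausdorffEdist
          (closure ((Subtype.val) ''
            {y : ↥(Metric.ball (0 : EuclideanSpace ℝ (Fin d)) R₁) | 0 < f y}))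
          K₀) := by
  classical
  set U : Set (EuclideanSpace ℝ (Fin d)) :=
    Metric.ball (0 : EuclideanSpace ℝ (Fin d)) R₁ with hU
  letI : MeasurableSpace C(↥U, ℝ) := borel _
  haveI : BorelSpace C(↥U, ℝ) := ⟨rfl⟩
  -- countable dense subset of U
  obtain ⟨D, hDc, hDd⟩ := TopologicalSpace.exists_countable_dense (↥U)
  -- countable dense subset of K₀
  obtain ⟨D', hD'c, hD'd⟩ := TopologicalSpace.exists_countable_dense (↥K₀)
  set EK : Set (EuclideanSpace ℝ (Fin d)) := Subtype.val '' D' with hEK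
  have hEKc : EK.Countable := hD'c.image _
  have hEKsub : EK ⊆ K₀ := by rintro _ ⟨y, _, rfl⟩; exact y.2
  have hK₀cl : K₀ ⊆ closure EK := by
    rintro k hk
    exact map_mem_closure continuous_subtype_val (hD'd ⟨k, hk⟩)
      (fun x hx => Set.mem_image_of_mem _ hx)
  -- pointwise rewriting of the Hausdorff distance
  have key : ∀ f : C(↥U, ℝ),
      EMetric.hausdorffEdist (closure (Subtype.val '' {y : ↥U | 0 < f y})) K₀
        = (⨆ y ∈ D, ⨆ _ : 0 < f y, EMetric.infEdist (y : EuclideanSpace ℝ (Fin d)) K₀) ⊔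
          ⨆ k ∈ EK, ⨅ y ∈ D, ⨅ _ : 0 < f y, edist k (y : EuclideanSpace ℝ (Fin d)) := by
    intro f
    set S : Set ↥U := {y | 0 < f y} with hS
    have hSo : IsOpen S := isOpen_lt continuous_const f.continuous
    have hScl : S ⊆ closure (S ∩ D) := hDd.open_subset_closure_inter hSo
    have swapS : ∀ g : ↥U → ENNReal, ⨆ y ∈ S ∩ D, g y = ⨆ y ∈ D, ⨆ _ : 0 < f y, g y := by
      intro g
      simp only [Set.mem_inter_iff, iSup_and]
      exact iSup_congr fun y => iSup_comm
    have swapI : ∀ g : ↥U → ENNReal, ⨅ y ∈ S ∩ D, g y = ⨅ y ∈ D, ⨅ _ : 0 < f y, g y := by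
      intro g
      simp only [Set.mem_inter_iff, iInf_and]
      exact iInf_congr fun y => iInf_comm
    rw [EMetric.hausdorffEdist, EMetric.hausdorffEdist_closure₁, EMetric.hausdorffEdist_def]
    congr 1
    · -- first component
      rw [iSup_image]
      calc ⨆ y ∈ S, EMetric.infEdist (y : EuclideanSpace ℝ (Fin d)) K₀
          = ⨆ y ∈ S ∩ D, EMetric.infEdist (y : EuclideanSpace ℝ (Fin d)) K₀ :=
            aux_biSup_eq (g := fun y : ↥U => EMetric.infEdist (y : EuclideanSpace ℝ (Fin d)) K₀)
              (EMetric.continuous_infEdist.comp continuous_subtype_val)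
              Set.inter_subset_left hScl
        _ = _ := swapS _
    · -- second component
      have h2 : ∀ k : EuclideanSpace ℝ (Fin d), EMetric.infEdist k (Subtype.val '' S)
          = ⨅ y ∈ D, ⨅ _ : 0 < f y, edist k (y : EuclideanSpace ℝ (Fin d)) := by
        intro k
        rw [EMetric.infEdist, Metric.infEDist, iInf_image,
          aux_biInf_eq (g := fun y : ↥U => edist k (y : EuclideanSpace ℝ (Fin d)))
            (continuous_const.edist continuous_subtype_val)
            (Set.inter_subset_left (t := D)) hScl, swapI]
      calc ⨆ k ∈ K₀, EMetric.infEdist k (Subtype.val '' S)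
          = ⨆ k ∈ EK, EMetric.infEdist k (Subtype.val '' S) :=
            aux_biSup_eq EMetric.continuous_infEdist hEKsub hK₀cl
        _ = ⨆ k ∈ EK, ⨅ y ∈ D, ⨅ _ : 0 < f y, edist k (y : EuclideanSpace ℝ (Fin d)) :=
            iSup_congr fun k => iSup_congr fun _ => h2 k
  rw [funext key]
  haveI : Countable ↥D := hDc.to_subtype
  haveI : Countable ↥EK := hEKc.to_subtype
  have hev : ∀ y : ↥U, MeasurableSet {f : C(↥U, ℝ) | 0 < f y} := by
    intro y
    exact measurableSet_lt measurable_const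
      (continuous_eval_const y).measurable
  refine Measurable.max ?_ ?_
  · rw [show (fun f : C(↥U, ℝ) => ⨆ y ∈ D, ⨆ _ : 0 < f y, EMetric.infEdist (y : EuclideanSpace ℝ (Fin d)) K₀)
        = fun f => ⨆ y : ↥D, ⨆ _ : 0 < f y, EMetric.infEdist ((y : ↥U) : EuclideanSpace ℝ (Fin d)) K₀ from
      funext fun f => by rw [iSup_subtype']]
    refine Measurable.iSup fun y => ?_
    simp only [aux_iSup_prop]
    exact Measurable.ite (hev y) measurable_const measurable_const
  · rw [show (fun f : C(↥U, ℝ) => ⨆ k ∈ EK, ⨅ y ∈ D, ⨅ _ : 0 < f y, edist k (y : EuclideanSpace ℝ (Fin d)))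
        = fun f => ⨆ k : ↥EK, ⨅ y : ↥D, ⨅ _ : 0 < f y, edist (k : EuclideanSpace ℝ (Fin d)) ((y : ↥U) : EuclideanSpace ℝ (Fin d)) from
      funext fun f => by rw [iSup_subtype']; exact iSup_congr fun k => by rw [iInf_subtype']]
    refine Measurable.iSup fun k => Measurable.iInf fun y => ?_
    simp only [aux_iInf_prop]
    exact Measurable.ite (hev y) measurable_const measurable_const
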